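/- Modified log-Sobolev inequality on the discrete cube: for any f : {-1,1}ⁿ → ℝ₊ with ∫ f dμ = 1 (μ uniform), the relative entropy satisfies H_μ(f) = ∫ f log f dμ ≤ Σ_{i=1}ⁿ ∫ (∂_i f)² / f dμ, where ∂_i f(x) = (f(x | x_i = 1) - f(x | x_i = -1))/2. -/

import Mathlib

open Finset

private lemma tangent_ineq {x m : ℝ} (hx : 0 < x) (hm : 0 < m) :
    x * Real.log x - m * Real.log m ≤ (Real.log x + 1) * (x - m) := by
  have h := Real.log_le_sub_one_of_pos (show 0 < x / m from div_pos hx hm)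
  rw [Real.log_div hx.ne' hm.ne'] at h
  have h2 : m * (Real.log x - Real.log m) ≤ x - m := by
    have := mul_le_mul_of_nonneg_left h hm.le
    calc m * (Real.log x - Real.log m) ≤ m * (x / m - 1) := this
      _ = x - m := by field_simp
  nlinarith [h2]

private lemma log_diff_le {a b : ℝ} (hb : 0 < b) (hab : b ≤ a) :
    Real.log a - Real.log b ≤ (a - b) * (a + b) / (2 * a * b) := by
  have ha : 0 < a := lt_of_lt_of_le hb hab
  have hr : (1:ℝ) ≤ a / b := (one_le_div hb).mpr hab
  have hlog : (0:ℝ) ≤ Real.log (a / b) := Real.log_nonneg hr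
  have h1 : Real.log (a / b) ≤ Real.sinh (Real.log (a / b)) :=
    Real.self_le_sinh_iff.mpr hlog
  rw [Real.sinh_log (by positivity)] at h1
  rw [← Real.log_div ha.ne' hb.ne']
  calc Real.log (a / b) ≤ (a / b - (a / b)⁻¹) / 2 := h1
    _ = (a - b) * (a + b) / (2 * a * b) := by
        rw [inv_div]
        field_simp
        ring

private lemma two_point {a b : ℝ} (ha : 0 < a) (hb : 0 < b) :
    a * Real.log a + b * Real.log b
      ≤ 2 * ((a + b) / 2 * Real.log ((a + b) / 2)) + ((a - b) / 2) ^ 2 * (1 / a + 1 / b) := by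
  have hm : 0 < (a + b) / 2 := by positivity
  have h1 := tangent_ineq ha hm
  have h2 := tangent_ineq hb hm
  have hkey : (a - b) / 2 * (Real.log a - Real.log b) ≤ ((a - b) / 2) ^ 2 * (1 / a + 1 / b) := by
    rcases le_total b a with h | h
    · have hl := log_diff_le hb h
      have ht : (0:ℝ) ≤ (a - b) / 2 := by linarith
      calc (a - b) / 2 * (Real.log a - Real.log b)
          ≤ (a - b) / 2 * ((a - b) * (a + b) / (2 * a * b)) :=
            mul_le_mul_of_nonneg_left hl ht
        _ = ((a - b) / 2) ^ 2 * (1 / a + 1 / b) := by field_simp; ring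
    · have hl := log_diff_le ha h
      have ht : (0:ℝ) ≤ (b - a) / 2 := by linarith
      calc (a - b) / 2 * (Real.log a - Real.log b)
          = (b - a) / 2 * (Real.log b - Real.log a) := by ring
        _ ≤ (b - a) / 2 * ((b - a) * (b + a) / (2 * b * a)) :=
            mul_le_mul_of_nonneg_left hl ht
        _ = ((a - b) / 2) ^ 2 * (1 / a + 1 / b) := by field_simp; ring
  nlinarith [h1, h2, hkey]

private lemma sq_div_add {a b : ℝ} (u v : ℝ) (ha : 0 < a) (hb : 0 < b) :
    (u + v) ^ 2 / (a + b) ≤ u ^ 2 / a + v ^ 2 / b := by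
  rw [div_add_div _ _ ha.ne' hb.ne', div_le_div_iff₀ (by positivity) (by positivity)]
  nlinarith [sq_nonneg (u * b - v * a)]

private lemma sum_cube_split {n : ℕ} (g : (Fin (n + 1) → Bool) → ℝ) :
    ∑ x : Fin (n + 1) → Bool, g x
      = ∑ y : Fin n → Bool, (g (Fin.cons true y) + g (Fin.cons false y)) := by
  rw [← (Fin.consEquiv (fun _ : Fin (n + 1) => Bool)).sum_comp g, Fintype.sum_prod_type]
  rw [Finset.sum_comm]
  refine Finset.sum_congr rfl fun y _ => ?_
  simp [Fin.consEquiv, Fintype.sum_bool]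

/-- Modified log-Sobolev inequality on the discrete cube `{-1,1}ⁿ` (coordinates encoded
by `Bool`): for strictly positive `f` with mean 1 under the uniform measure,
`∫ f log f dμ ≤ Σᵢ ∫ (∂ᵢ f)²/f dμ` where `∂ᵢ f(x) = (f(x|xᵢ=1) - f(x|xᵢ=-1))/2`. -/
theorem modified_log_sobolev_cube (n : ℕ) (f : (Fin n → Bool) → ℝ)
    (hpos : ∀ x, 0 < f x)
    (hmean : (∑ x : Fin n → Bool, f x) / 2 ^ n = 1) :
    (∑ x : Fin n → Bool, f x * Real.log (f x)) / 2 ^ n ≤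
      ∑ i : Fin n, (∑ x : Fin n → Bool,
        ((f (Function.update x i true) - f (Function.update x i false)) / 2) ^ 2 / f x)
          / 2 ^ n := by
  induction n with
  | zero =>
      have h1 : ∑ x : Fin 0 → Bool, f x = f (fun i => i.elim0) :=
        Fintype.sum_subsingleton _ _
      rw [pow_zero, div_one, h1] at hmean
      have h3 : ∑ x : Fin 0 → Bool, f x * Real.log (f x)
          = f (fun i => i.elim0) * Real.log (f (fun i => i.elim0)) :=
        Fintype.sum_subsingleton _ _
      rw [h3, hmean]
      simp
  | succ n ih =>
      have h2 : (0:ℝ) < 2 ^ (n + 1) := by positivity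
      -- abbreviations
      set a : (Fin n → Bool) → ℝ := fun y => f (Fin.cons true y) with ha_def
      set b : (Fin n → Bool) → ℝ := fun y => f (Fin.cons false y) with hb_def
      have hapos : ∀ y, 0 < a y := fun y => hpos _
      have hbpos : ∀ y, 0 < b y := fun y => hpos _
      set g : (Fin n → Bool) → ℝ := fun y => (a y + b y) / 2 with hg_def
      have hgpos : ∀ y, 0 < g y := fun y => by
        have := hapos y; have := hbpos y
        simp only [hg_def]; positivity
      have hgmean : (∑ y : Fin n → Bool, g y) / 2 ^ n = 1 := by
        have hsplit := sum_cube_split f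
        rw [hsplit] at hmean
        rw [← hmean]
        rw [hg_def]
        rw [← Finset.sum_div]
        rw [pow_succ]
        field_simp
        rfl
      have IH := ih g hgpos hgmean
      -- clear denominators in IH
      have hn2 : (0:ℝ) < 2 ^ n := by positivity
      have IH' : ∑ y : Fin n → Bool, g y * Real.log (g y)
          ≤ ∑ j : Fin n, ∑ y : Fin n → Bool,
            ((g (Function.update y j true) - g (Function.update y j false)) / 2) ^ 2 / g y := by
        rw [← Finset.sum_div, div_le_div_iff_of_pos_right hn2] at IH
        exact IH
      -- main unnormalized inequality
      have main : ∑ x : Fin (n + 1) → Bool, f x * Real.log (f x)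
          ≤ ∑ i : Fin (n + 1), ∑ x : Fin (n + 1) → Bool,
              ((f (Function.update x i true) - f (Function.update x i false)) / 2) ^ 2 / f x := by
        rw [sum_cube_split (fun x => f x * Real.log (f x))]
        rw [Fin.sum_univ_succ]
        -- the i = 0 term
        have hS0 : ∑ x : Fin (n + 1) → Bool,
            ((f (Function.update x 0 true) - f (Function.update x 0 false)) / 2) ^ 2 / f x
            = ∑ y : Fin n → Bool,
              (((a y - b y) / 2) ^ 2 / a y + ((a y - b y) / 2) ^ 2 / b y) := by
          rw [sum_cube_split]
          refine Finset.sum_congr rfl fun y _ => ?_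
          rw [Fin.update_cons_zero, Fin.update_cons_zero, Fin.update_cons_zero,
            Fin.update_cons_zero]
        -- the i = j.succ terms
        have hSsucc : ∀ j : Fin n, ∑ x : Fin (n + 1) → Bool,
            ((f (Function.update x j.succ true) - f (Function.update x j.succ false)) / 2) ^ 2 / f x
            = ∑ y : Fin n → Bool,
              (((a (Function.update y j true) - a (Function.update y j false)) / 2) ^ 2 / a y
               + ((b (Function.update y j true) - b (Function.update y j false)) / 2) ^ 2 / b y) := by
          intro j
          rw [sum_cube_split]
          refine Finset.sum_congr rfl fun y _ => ?_
          rw [← Fin.cons_update, ← Fin.cons_update, ← Fin.cons_update, ← Fin.cons_update]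
        rw [hS0]
        calc ∑ y : Fin n → Bool,
              (a y * Real.log (a y) + b y * Real.log (b y))
            ≤ ∑ y : Fin n → Bool,
              (2 * (g y * Real.log (g y))
                + (((a y - b y) / 2) ^ 2 / a y + ((a y - b y) / 2) ^ 2 / b y)) := by
              refine Finset.sum_le_sum fun y _ => ?_
              have := two_point (hapos y) (hbpos y)
              have e1 : ((a y - b y) / 2) ^ 2 * (1 / a y + 1 / b y)
                  = ((a y - b y) / 2) ^ 2 / a y + ((a y - b y) / 2) ^ 2 / b y := by
                field_simp [(hapos y).ne', (hbpos y).ne']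
              rw [hg_def]
              nlinarith [this]
          _ = 2 * ∑ y : Fin n → Bool, g y * Real.log (g y)
                + ∑ y : Fin n → Bool,
                  (((a y - b y) / 2) ^ 2 / a y + ((a y - b y) / 2) ^ 2 / b y) := by
              rw [Finset.sum_add_distrib, Finset.mul_sum]
          _ ≤ 2 * ∑ j : Fin n, ∑ y : Fin n → Bool,
                ((g (Function.update y j true) - g (Function.update y j false)) / 2) ^ 2 / g y
                + ∑ y : Fin n → Bool,
                  (((a y - b y) / 2) ^ 2 / a y + ((a y - b y) / 2) ^ 2 / b y) := by
              have := IH'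
              linarith
          _ ≤ ∑ j : Fin n, ∑ y : Fin n → Bool,
                (((a (Function.update y j true) - a (Function.update y j false)) / 2) ^ 2 / a y
                 + ((b (Function.update y j true) - b (Function.update y j false)) / 2) ^ 2 / b y)
                + ∑ y : Fin n → Bool,
                  (((a y - b y) / 2) ^ 2 / a y + ((a y - b y) / 2) ^ 2 / b y) := by
              have hterm : ∀ j : Fin n, ∀ y : Fin n → Bool,
                  2 * (((g (Function.update y j true) - g (Function.update y j false)) / 2) ^ 2
                    / g y)
                  ≤ ((a (Function.update y j true) - a (Function.update y j false)) / 2) ^ 2 / a y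
                    + ((b (Function.update y j true) - b (Function.update y j false)) / 2) ^ 2
                      / b y := by
                intro j y
                set u := (a (Function.update y j true) - a (Function.update y j false)) / 2 with hu
                set v := (b (Function.update y j true) - b (Function.update y j false)) / 2 with hv
                have hcs := sq_div_add u v (hapos y) (hbpos y)
                have e2 : (g (Function.update y j true) - g (Function.update y j false)) / 2
                    = (u + v) / 2 := by
                  rw [hg_def, hu, hv]; ring
                rw [e2, hg_def]
                have e3 : ((u + v) / 2) ^ 2 / ((a y + b y) / 2)
                    = (u + v) ^ 2 / (a y + b y) / 2 := by
                  have h1 : (0:ℝ) < a y + b y := by have := hapos y; have := hbpos y; linarith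
                  field_simp
                rw [e3]
                linarith
              have hstep : 2 * ∑ j : Fin n, ∑ y : Fin n → Bool,
                  ((g (Function.update y j true) - g (Function.update y j false)) / 2) ^ 2 / g y
                  ≤ ∑ j : Fin n, ∑ y : Fin n → Bool,
                    (((a (Function.update y j true) - a (Function.update y j false)) / 2) ^ 2 / a y
                     + ((b (Function.update y j true) - b (Function.update y j false)) / 2) ^ 2
                       / b y) := by
                rw [Finset.mul_sum]
                refine Finset.sum_le_sum fun j _ => ?_
                rw [Finset.mul_sum]
                exact Finset.sum_le_sum fun y _ => hterm j y
              linarith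
          _ = _ := by
              rw [add_comm]
              congr 1
              exact Finset.sum_congr rfl fun j _ => (hSsucc j).symm
      -- divide by 2^(n+1)
      rw [← Finset.sum_div, div_le_div_iff_of_pos_right h2]
      exact main
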